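/- Let g ≥ 2 be an integer, let r ≥ 1 and d be integers, and let h := gcd(r, d). Assume r > h. Then there exist unique integers r_F and d_F satisfying both (1-g)·r_F·r + r_F·d - r·d_F = h and r < h·r_F < 2r. -/

import Mathlib

/-- Key numerical lemma of Section 3 of the King–Schofield rationality proof:
for `g ≥ 2`, `r ≥ 1`, `h = gcd(r, d)` with `r > h`, there exist unique integers
`r_F`, `d_F` with `(1-g)·r_F·r + r_F·d - r·d_F = h` and `r < h·r_F < 2r`. -/
theorem unique_rF_dF (g r d : ℤ) (hg : 2 ≤ g) (hr : 1 ≤ r)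
    (h : ℤ) (hh : h = Int.gcd r d) (hlt : h < r) :
    ∃! p : ℤ × ℤ,
      (1 - g) * p.1 * r + p.1 * d - r * p.2 = h ∧ r < h * p.1 ∧ h * p.1 < 2 * r := by
  have hh0 : 0 < h := by
    rw [hh]
    exact_mod_cast Int.gcd_pos_iff.mpr (Or.inl (by omega))
  obtain ⟨A, B, hbez⟩ : ∃ A B, h = r * A + d * B :=
    ⟨Int.gcdA r d, Int.gcdB r d, by rw [hh]; exact Int.gcd_eq_gcd_ab r d⟩
  obtain ⟨r', hr'⟩ : h ∣ r := by rw [hh]; exact Int.gcd_dvd_left r d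
  obtain ⟨d', hd'⟩ : h ∣ d := by rw [hh]; exact Int.gcd_dvd_right r d
  have hr'2 : 2 ≤ r' := by nlinarith
  have hbez' : 1 = r' * A + d' * B := by
    have h1 : h * 1 = h * (r' * A + d' * B) := by
      rw [mul_one]; rw [hr', hd'] at hbez; linarith [hbez]
    exact mul_left_cancel₀ (by omega) h1
  obtain ⟨u, q, hu0, hur, huq⟩ : ∃ u q, 0 ≤ u ∧ u < r' ∧ B = r' * q + u :=
    ⟨B % r', B / r', Int.emod_nonneg B (by omega), Int.emod_lt_of_pos B (by omega),
      by rw [Int.emod_def]; ring⟩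
  have hu1 : 1 ≤ u := by
    rcases (by omega : 1 ≤ u ∨ u = 0) with h' | h'
    · exact h'
    · exfalso
      have hd1 : r' ∣ 1 := ⟨A + d' * q, by rw [hbez', huq, h']; ring⟩
      have := Int.le_of_dvd one_pos hd1
      omega
  -- the first coordinate
  have hkey : (r' + u) * d' - 1 = r' * (d' - A - q * d') := by
    linear_combination (-d') * huq - hbez'
  refine ⟨(r' + u, (1 - g) * (r' + u) + (d' - A - q * d')), ⟨?_, ?_, ?_⟩, ?_⟩
  · show (1 - g) * (r' + u) * r + (r' + u) * d - r * ((1 - g) * (r' + u) + (d' - A - q * d')) = h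
    rw [hr', hd']
    linear_combination h * hkey
  · show r < h * (r' + u)
    rw [hr']
    exact mul_lt_mul_of_pos_left (by omega) hh0
  · show h * (r' + u) < 2 * r
    calc h * (r' + u) < h * (2 * r') := mul_lt_mul_of_pos_left (by omega) hh0
      _ = 2 * r := by rw [hr']; ring
  · rintro ⟨a, b⟩ ⟨heq, h1, h2⟩
    simp only at heq h1 h2 ⊢
    have ha1 : r' < a := by
      rw [hr'] at h1
      exact lt_of_mul_lt_mul_left h1 (by omega)
    have ha2 : a < 2 * r' := by
      rw [hr'] at h2
      have h2' : h * a < h * (2 * r') := by linarith [h2]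
      exact lt_of_mul_lt_mul_left h2' (by omega)
    have hmeq : a * d' - 1 = r' * (b - (1 - g) * a) := by
      have h3 : h * (a * d' - 1) = h * (r' * (b - (1 - g) * a)) := by
        rw [hr', hd'] at heq
        linear_combination heq
      exact mul_left_cancel₀ (by omega) h3
    obtain ⟨t, hdvd⟩ : ∃ t, a - (r' + u) = r' * t := by
      refine ⟨(a - (r' + u)) * A + ((b - (1 - g) * a) - (d' - A - q * d')) * B, ?_⟩
      have h3 : (a - (r' + u)) * d' = r' * ((b - (1 - g) * a) - (d' - A - q * d')) := by
        linear_combination hmeq - hkey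
      have h4 : (a - (r' + u)) * 1 = (a - (r' + u)) * (r' * A + d' * B) := by rw [← hbez']
      linear_combination h4 + B * h3
    have hb1 : r' * t < r' * 1 := by
      rw [mul_one]; linarith [hdvd]
    have hb2 : r' * (-1) < r' * t := by
      linarith [hdvd]
    have ht1 : t < 1 := lt_of_mul_lt_mul_left hb1 (by omega)
    have ht2 : -1 < t := lt_of_mul_lt_mul_left hb2 (by omega)
    have haF : a = r' + u := by
      have : t = 0 := by omega
      rw [this, mul_zero] at hdvd; omega
    have hbF : b = (1 - g) * (r' + u) + (d' - A - q * d') := by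
      rw [haF] at hmeq
      have h5 : r' * (b - (1 - g) * a) = r' * (d' - A - q * d') := by
        rw [haF]; linarith [hmeq, hkey]
      have h6 := mul_left_cancel₀ (show r' ≠ 0 by omega) h5
      rw [haF] at h6; linarith [h6]
    exact Prod.ext haF hbF
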